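/- Let Ā' be the block matrix with first block row [Ā₀, Ē_{0,1}, …, Ē_{0,l}] and diagonal blocks Ā₀ ∈ {0,1}^{n₀×n₀}, Ā₁ ∈ {0,1}^{n₁×n₁}, …, Ā_l ∈ {0,1}^{n_l×n_l} (all other blocks zero), and let B̄' = [B̄₀ᵀ, 0, …, 0]ᵀ with B̄₀ ∈ {0,1}^{n₀×p₀}. Assign to each edge of the system bipartite graph B(Ā', B̄') the weight 1 if it joins a left state vertex x_j to a right state vertex x_k with both indices j, k ≤ n₀ or both indices j, k > n₀, and weight 2 otherwise (in particular every input edge has weight 2). Then for any minimum-weight maximum matching M of B(Ā', B̄') w.r.t. this weight, the restriction of M to the edges of B(Ā₀) (edges between left and right state vertices of block 0) is a maximum matching of the state bipartite graph B(Ā₀), and for each k = 1,…,l the restriction of M to the edges of B(Ā_k) is a maximum matching of B(Ā_k). -/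

import Mathlib

open Matrix

/-- Controllability matrix `[B, AB, …, A^{n-1}B]` (columns indexed by `Fin (card X) × U`). -/
def ctrbMatrix {X U : Type*} [Fintype X] [DecidableEq X]
    (A : Matrix X X ℝ) (B : Matrix X U ℝ) :
    Matrix X (Fin (Fintype.card X) × U) ℝ :=
  fun i kj => (A ^ (kj.1 : ℕ) * B) i kj.2

/-- A real pair `(A,B)` is controllable if its controllability matrix has full rank. -/
def Controllable {X U : Type*} [Fintype X] [DecidableEq X] [Fintype U]
    (A : Matrix X X ℝ) (B : Matrix X U ℝ) : Prop :=
  (ctrbMatrix A B).rank = Fintype.card X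

/-- `M` has the same sparsity pattern as the Boolean matrix `Mb`. -/
def SameSparsity {X Y : Type*} (M : Matrix X Y ℝ) (Mb : Matrix X Y Bool) : Prop :=
  ∀ i j, M i j = 0 ↔ Mb i j = false

/-- Structural controllability of a structural (Boolean) pair. -/
def StructurallyControllable {X U : Type*} [Fintype X] [DecidableEq X] [Fintype U]
    (Ab : Matrix X X Bool) (Bb : Matrix X U Bool) : Prop :=
  ∃ A : Matrix X X ℝ, ∃ B : Matrix X U ℝ,
    SameSparsity A Ab ∧ SameSparsity B Bb ∧ Controllable A B

/-- Edge relation of the system digraph `D(Ā,B̄)`. -/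
def sysDigraphRel {X U : Type*} (Ab : Matrix X X Bool) (Bb : Matrix X U Bool) :
    (X ⊕ U) → (X ⊕ U) → Prop :=
  fun v w => match v, w with
  | Sum.inl j, Sum.inl i => Ab i j = true
  | Sum.inr k, Sum.inl i => Bb i k = true
  | _, Sum.inr _ => False

/-- A state vertex is input-reachable if some input vertex has a directed path to it. -/
def InputReachable {X U : Type*} (Ab : Matrix X X Bool) (Bb : Matrix X U Bool) (x : X) : Prop :=
  ∃ u : U, Relation.ReflTransGen (sysDigraphRel Ab Bb) (Sum.inr u) (Sum.inl x)

/-- Edge relation of the system bipartite graph `B(Ā,B̄)` (left = states ⊕ inputs, right = states). -/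
def sysBipEdge {X U : Type*} (Ab : Matrix X X Bool) (Bb : Matrix X U Bool) :
    (X ⊕ U) → X → Prop :=
  fun v i => match v with
  | Sum.inl j => Ab i j = true
  | Sum.inr k => Bb i k = true

/-- Edge relation of the state bipartite graph `B(Ā)`. -/
def stateBipEdge {X : Type*} (Ab : Matrix X X Bool) : X → X → Prop :=
  fun j i => Ab i j = true

/-- A matching of a bipartite graph with edge relation `E`: a set of edges sharing no
left vertex and no right vertex. -/
def IsMatching {α β : Type*} (E : α → β → Prop) (M : Set (α × β)) : Prop :=
  (∀ e ∈ M, E e.1 e.2) ∧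
  (∀ e ∈ M, ∀ f ∈ M, e.1 = f.1 → e = f) ∧
  (∀ e ∈ M, ∀ f ∈ M, e.2 = f.2 → e = f)

/-- Right vertices belonging to no edge of `M`. -/
def rightUnmatched {α β : Type*} (M : Set (α × β)) : Set β :=
  {b | ∀ e ∈ M, e.2 ≠ b}

/-- Left vertices belonging to no edge of `M`. -/
def leftUnmatched {α β : Type*} (M : Set (α × β)) : Set α :=
  {a | ∀ e ∈ M, e.1 ≠ a}

/-- A maximum matching: a matching of the largest cardinality. -/
def IsMaxMatching {α β : Type*} (E : α → β → Prop) (M : Set (α × β)) : Prop :=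
  IsMatching E M ∧ ∀ M' : Set (α × β), IsMatching E M' → M'.ncard ≤ M.ncard

/-- `S` is a strongly connected component of the digraph with edge relation `R`. -/
def IsSCC {V : Type*} (R : V → V → Prop) (S : Set V) : Prop :=
  S.Nonempty ∧ (∀ u ∈ S, ∀ v ∈ S, Relation.ReflTransGen R u v) ∧
  ∀ w : V, (∀ u ∈ S, Relation.ReflTransGen R u w ∧ Relation.ReflTransGen R w u) → w ∈ S

/-- An SCC is non-top linked if it has no incoming edge from outside. -/
def NonTopLinked {V : Type*} (R : V → V → Prop) (S : Set V) : Prop :=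
  ∀ u v : V, R u v → v ∈ S → u ∈ S

/-- Dynamics pattern `(I_r ⊗ Ā') ∨ (Ē ⊗ H̄)` of a system of `r` similar subsystems. -/
def simA {n : ℕ} (r : ℕ) (A' H : Matrix (Fin n) (Fin n) Bool)
    (E : Matrix (Fin r) (Fin r) Bool) :
    Matrix (Fin r × Fin n) (Fin r × Fin n) Bool :=
  fun q q' => ((if q.1 = q'.1 then A' q.2 q'.2 else false) || (E q.1 q'.1 && H q.2 q'.2))

/-- Input pattern `I_r ⊗ B̄'` of a system of `r` similar subsystems. -/
def simB {n p : ℕ} (r : ℕ) (B' : Matrix (Fin n) (Fin p) Bool) :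
    Matrix (Fin r × Fin n) (Fin r × Fin p) Bool :=
  fun q k => if q.1 = k.1 then B' q.2 k.2 else false

/-- Entrywise OR of Boolean matrices. -/
def orMat {X Y : Type*} (M N : Matrix X Y Bool) : Matrix X Y Bool :=
  fun i j => M i j || N i j

/-- Dynamics pattern of an interconnected system: diagonal blocks `Ā_i`,
off-diagonal blocks `Ē_{i,j}`. -/
def interA {r : ℕ} {n : Fin r → ℕ}
    (A : ∀ i, Matrix (Fin (n i)) (Fin (n i)) Bool)
    (E : ∀ i j, Matrix (Fin (n i)) (Fin (n j)) Bool) :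
    Matrix (Σ i, Fin (n i)) (Σ i, Fin (n i)) Bool :=
  fun q q' => if h : q'.1 = q.1 then A q.1 q.2 (h ▸ q'.2) else E q.1 q'.1 q.2 q'.2

/-- Input pattern of an interconnected system: block diagonal with blocks `B̄_i`. -/
def interB {r : ℕ} {n p : Fin r → ℕ}
    (B : ∀ i, Matrix (Fin (n i)) (Fin (p i)) Bool) :
    Matrix (Σ i, Fin (n i)) (Σ i, Fin (p i)) Bool :=
  fun q k => if h : k.1 = q.1 then B q.1 q.2 (h ▸ k.2) else false

/-- A minimum-weight maximum matching w.r.t. the edge weight `c`. -/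
def IsMinWtMaxMatching {α β : Type*} (E : α → β → Prop) (c : α × β → ℕ)
    (M : Set (α × β)) : Prop :=
  IsMaxMatching E M ∧
    ∀ M' : Set (α × β), IsMaxMatching E M' → (∑ᶠ e ∈ M, c e) ≤ ∑ᶠ e ∈ M', c e

/-- The block matrix `Ā'` with first block row `[Ā₀, Ē₁, …, Ē_l]` and diagonal blocks
`Ā₀, Ā₁, …, Ā_l` (all other blocks zero); block `0` is indexed by `Sum.inl`, blocks
`1, …, l` by `Sum.inr`. -/
def blockA {n0 l : ℕ} {m : Fin l → ℕ}
    (A0 : Matrix (Fin n0) (Fin n0) Bool)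
    (Ak : ∀ k, Matrix (Fin (m k)) (Fin (m k)) Bool)
    (Ek : ∀ k, Matrix (Fin n0) (Fin (m k)) Bool) :
    Matrix (Fin n0 ⊕ (Σ k, Fin (m k))) (Fin n0 ⊕ (Σ k, Fin (m k))) Bool :=
  fun q q' => match q, q' with
  | Sum.inl i, Sum.inl j => A0 i j
  | Sum.inl i, Sum.inr b => Ek b.1 i b.2
  | Sum.inr _, Sum.inl _ => false
  | Sum.inr a, Sum.inr b => if h : b.1 = a.1 then Ak a.1 a.2 (h ▸ b.2) else false

/-- The input pattern `B̄' = [B̄₀ᵀ, 0, …, 0]ᵀ`. -/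
def blockB {n0 l p0 : ℕ} {m : Fin l → ℕ} (B0 : Matrix (Fin n0) (Fin p0) Bool) :
    Matrix (Fin n0 ⊕ (Σ k, Fin (m k))) (Fin p0) Bool :=
  fun q j => match q with
  | Sum.inl i => B0 i j
  | Sum.inr _ => false

/-- Weight `1` on edges joining two state vertices of block `0` or two state vertices
outside block `0`, and weight `2` on every other edge (in particular on input edges). -/
def blockWeight {n0 l p0 : ℕ} {m : Fin l → ℕ} :
    ((Fin n0 ⊕ (Σ k : Fin l, Fin (m k))) ⊕ Fin p0) × (Fin n0 ⊕ (Σ k : Fin l, Fin (m k))) → ℕ :=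
  fun e => match e.1, e.2 with
  | Sum.inl (Sum.inl _), Sum.inl _ => 1
  | Sum.inl (Sum.inr _), Sum.inr _ => 1
  | _, _ => 2

/-- The two injectivity conditions of a matching (without the edge condition). -/
def MPairs {α β : Type*} (M : Set (α × β)) : Prop :=
  (∀ e ∈ M, ∀ f ∈ M, e.1 = f.1 → e = f) ∧ (∀ e ∈ M, ∀ f ∈ M, e.2 = f.2 → e = f)

lemma MPairs.mono {α β : Type*} {M N : Set (α × β)} (h : MPairs M) (hs : N ⊆ M) : MPairs N :=
  ⟨fun e he f hf => h.1 e (hs he) f (hs hf), fun e he f hf => h.2 e (hs he) f (hs hf)⟩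

lemma sum_one_eq_ncard {γ : Type*} {s : Set γ} (hs : s.Finite) {c : γ → ℕ}
    (h : ∀ e ∈ s, c e = 1) : ∑ᶠ e ∈ s, c e = s.ncard := by
  calc ∑ᶠ e ∈ s, c e = ∑ᶠ e ∈ (hs.toFinset : Set γ), (1:ℕ) :=
        finsum_mem_congr (by simp) (fun e he => h e (by simpa using he))
    _ = ∑ e ∈ hs.toFinset, 1 := finsum_mem_coe_finset _ _
    _ = s.ncard := by rw [Set.ncard_eq_toFinset_card _ hs]; simp

lemma aug_aux {α β : Type*} (n : ℕ) :
    ∀ (M N : Set (α × β)), M.ncard ≤ n → M.Finite → N.Finite →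
      MPairs M → MPairs N → M.ncard < N.ncard →
      ∃ (M' : Set (α × β)) (S : Set α),
        M' ⊆ M ∪ N ∧ MPairs M' ∧ M'.ncard = M.ncard + 1 ∧
        S.Subsingleton ∧ (∀ a ∈ S, ∀ e ∈ M, e.1 ≠ a) ∧
        (∀ a ∈ S, ∃ e ∈ M', e.1 = a) ∧
        (∀ e ∈ M', e.1 ∈ S ∨ ∃ f ∈ M, f.1 = e.1) := by
  induction n with
  | zero =>
    intro M N hle hMf hNf hM hN hlt
    have hM0 : M = ∅ := (Set.ncard_eq_zero hMf).1 (Nat.le_zero.1 hle)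
    subst hM0
    obtain ⟨e, he⟩ : N.Nonempty := Set.nonempty_of_ncard_ne_zero (by omega)
    refine ⟨{e}, {e.1}, ?_, ?_, ?_, ?_, ?_, ?_, ?_⟩
    · intro f hf; exact Or.inr (by simpa using hf ▸ he)
    · constructor <;> (intro a ha b hb _; simp_all)
    · simp
    · exact Set.subsingleton_singleton
    · intro a _ f hf; simp at hf
    · intro a ha; exact ⟨e, rfl, ha.symm⟩
    · intro f hf; left; simp_all
  | succ n ih =>
    intro M N hle hMf hNf hM hN hlt
    -- find an N-edge whose right endpoint is M-free
    have hex : ∃ e ∈ N, ∀ f ∈ M, f.2 ≠ e.2 := by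
      by_contra h
      push_neg at h
      choose g hg1 hg2 using h
      have : N.ncard ≤ M.ncard := by
        classical
        refine Set.ncard_le_ncard_of_injOn
          (fun e => if he : e ∈ N then g e he else e) (fun e he => by simp [he, hg1]) ?_ hMf
        intro e he e' he' hee
        simp only [dif_pos he, dif_pos he'] at hee
        have h2 : e.2 = e'.2 := by
          rw [← hg2 e he, ← hg2 e' he', hee]
        exact hN.2 e he e' he' h2
      omega
    obtain ⟨⟨a, b⟩, habN, hbfree⟩ := hex
    by_cases hma : ∃ f ∈ M, f.1 = a
    · -- a is matched in M by f; recurse on M \ {f}, N \ {(a,b)}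
      obtain ⟨f, hfM, hfa⟩ := hma
      set M₁ : Set (α × β) := M \ {f} with hM₁def
      set N₁ : Set (α × β) := N \ {(a, b)} with hN₁def
      have hM₁card : M₁.ncard = M.ncard - 1 := by
        rw [hM₁def, Set.ncard_diff (by simpa using hfM) (by simp)]
        simp
      have hN₁card : N₁.ncard = N.ncard - 1 := by
        rw [hN₁def, Set.ncard_diff (by simpa using habN) (by simp)]
        simp
      have hMpos : 1 ≤ M.ncard := by
        have : f ∈ M := hfM
        have := Set.ncard_pos hMf |>.2 ⟨f, hfM⟩
        omega
      obtain ⟨K, S₁, hKsub, hKm, hKcard, hS₁ss, hS₁free, hS₁cov, hKleft⟩ :=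
        ih M₁ N₁ (by omega) hMf.diff hNf.diff
          (hM.mono Set.diff_subset) (hN.mono Set.diff_subset) (by omega)
      -- a is not a left vertex of K
      have haK : ∀ e ∈ K, e.1 ≠ a := by
        intro e heK hea
        rcases hKsub heK with h1 | h1
        · exact h1.2 (hM.1 e h1.1 f hfM (hea.trans hfa.symm))
        · exact h1.2 (hN.1 e h1.1 (a, b) habN hea)
      -- b is not a right vertex of K
      have hbK : ∀ e ∈ K, e.2 ≠ b := by
        intro e heK heb
        rcases hKsub heK with h1 | h1
        · exact hbfree e h1.1 heb
        · exact h1.2 (hN.2 e h1.1 (a, b) habN heb)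
      have habK : (a, b) ∉ K := fun h => haK _ h rfl
      have hKfin : K.Finite := (hMf.diff.union hNf.diff).subset hKsub
      refine ⟨insert (a, b) K, S₁, ?_, ?_, ?_, hS₁ss, ?_, ?_, ?_⟩
      · intro e he
        rcases Set.mem_insert_iff.1 he with rfl | he
        · exact Or.inr habN
        · rcases hKsub he with h | h
          · exact Or.inl h.1
          · exact Or.inr h.1
      · constructor
        · intro e he g hg h1
          rcases Set.mem_insert_iff.1 he with rfl | he <;>
            rcases Set.mem_insert_iff.1 hg with rfl | hg
          · rfl
          · exact absurd h1.symm (haK g hg)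
          · exact absurd h1 (haK e he)
          · exact hKm.1 e he g hg h1
        · intro e he g hg h2
          rcases Set.mem_insert_iff.1 he with rfl | he <;>
            rcases Set.mem_insert_iff.1 hg with rfl | hg
          · rfl
          · exact absurd h2.symm (hbK g hg)
          · exact absurd h2 (hbK e he)
          · exact hKm.2 e he g hg h2
      · rw [Set.ncard_insert_of_notMem habK hKfin, hKcard, hM₁card]; omega
      · intro x hx e heM hex
        obtain ⟨e', he'K, he'x⟩ := hS₁cov x hx
        have hxa : x ≠ a := fun h => haK e' he'K (he'x.trans h)
        have heM₁ : e ∈ M₁ := by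
          refine ⟨heM, ?_⟩
          intro hef
          simp only [Set.mem_singleton_iff] at hef
          exact hxa (hex ▸ hef ▸ hfa)
        exact hS₁free x hx e heM₁ hex
      · intro x hx
        obtain ⟨e, heK, hex⟩ := hS₁cov x hx
        exact ⟨e, Set.mem_insert_of_mem _ heK, hex⟩
      · intro e he
        rcases Set.mem_insert_iff.1 he with rfl | he
        · exact Or.inr ⟨f, hfM, hfa⟩
        · rcases hKleft e he with h | ⟨g, hg, hgl⟩
          · exact Or.inl h
          · exact Or.inr ⟨g, hg.1, hgl⟩
    · -- a is free in M
      push_neg at hma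
      have habM : (a, b) ∉ M := fun h => hma _ h rfl
      refine ⟨insert (a, b) M, {a}, ?_, ?_, ?_, Set.subsingleton_singleton, ?_, ?_, ?_⟩
      · intro e he
        rcases Set.mem_insert_iff.1 he with rfl | he
        · exact Or.inr habN
        · exact Or.inl he
      · constructor
        · intro e he g hg h1
          rcases Set.mem_insert_iff.1 he with rfl | he <;>
            rcases Set.mem_insert_iff.1 hg with rfl | hg
          · rfl
          · exact absurd h1.symm (hma g hg)
          · exact absurd h1 (hma e he)
          · exact hM.1 e he g hg h1
        · intro e he g hg h2
          rcases Set.mem_insert_iff.1 he with rfl | he <;>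
            rcases Set.mem_insert_iff.1 hg with rfl | hg
          · rfl
          · exact absurd h2.symm (hbfree g hg)
          · exact absurd h2 (hbfree e he)
          · exact hM.2 e he g hg h2
      · rw [Set.ncard_insert_of_notMem habM hMf]
      · intro x hx e heM hex; simp only [Set.mem_singleton_iff] at hx
        exact hma e heM (hex.trans hx)
      · intro x hx; simp only [Set.mem_singleton_iff] at hx
        exact ⟨(a, b), Set.mem_insert _ _, hx.symm⟩
      · intro e he
        rcases Set.mem_insert_iff.1 he with rfl | he
        · exact Or.inl rfl
        · exact Or.inr ⟨e, he, rfl⟩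

lemma restrict_maxMatching {α β α' β' : Type*} [Finite α] [Finite β]
    (E : α → β → Prop) (c : α × β → ℕ)
    (ι : α' → α) (ρ : β' → β) (hι : Function.Injective ι) (hρ : Function.Injective ρ)
    (E' : α' → β' → Prop) (hE' : ∀ a b, E' a b ↔ E (ι a) (ρ b))
    (hAB : ∀ a b, E a b → (∃ b', ρ b' = b) → ∃ a', ι a' = a)
    (hc1 : ∀ a b, c (ι a, ρ b) = 1)
    (hc2 : ∀ a b, E a b → (∃ a', ι a' = a) → (∀ b', ρ b' ≠ b) → 2 ≤ c (a, b))
    (M : Set (α × β)) (hM : IsMinWtMaxMatching E c M) :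
    IsMaxMatching E' {e : α' × β' | (ι e.1, ρ e.2) ∈ M} := by
  classical
  obtain ⟨⟨⟨hMedge, hMl, hMr⟩, hMmax⟩, hMmin⟩ := hM
  set emb : α' × β' → α × β := fun e => (ι e.1, ρ e.2) with hembdef
  have hembinj : Function.Injective emb := by
    intro e f h
    exact Prod.ext (hι (congrArg Prod.fst h)) (hρ (congrArg Prod.snd h))
  set Mk : Set (α' × β') := {e : α' × β' | (ι e.1, ρ e.2) ∈ M} with hMkdef
  have hMkmatch : IsMatching E' Mk := by
    refine ⟨fun e he => (hE' _ _).2 (hMedge _ he), ?_, ?_⟩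
    · intro e he f hf h1
      exact hembinj (hMl (emb e) he (emb f) hf (congrArg ι h1))
    · intro e he f hf h2
      exact hembinj (hMr (emb e) he (emb f) hf (congrArg ρ h2))
  refine ⟨hMkmatch, ?_⟩
  intro N' hN'
  by_contra hlt'
  push_neg at hlt'
  set MAB : Set (α × β) := emb '' Mk with hMABdef
  set N : Set (α × β) := emb '' N' with hNdef
  have hMABsub : MAB ⊆ M := by
    rintro e ⟨e', he', rfl⟩; exact he'
  have hMABchar : ∀ e, e ∈ M → (∃ a', ι a' = e.1) → (∃ b', ρ b' = e.2) → e ∈ MAB := by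
    rintro ⟨x, y⟩ he ⟨a', ha'⟩ ⟨b', hb'⟩
    exact ⟨(a', b'), by simpa [hMkdef, ha', hb'] using he, by simp [hembdef, ha', hb']⟩
  have hMBA : ∀ e ∈ M, (∃ b', ρ b' = e.2) → e ∈ MAB := by
    intro e he hb
    exact hMABchar e he (hAB e.1 e.2 (hMedge e he) hb) hb
  have hMABcard : MAB.ncard = Mk.ncard := Set.ncard_image_of_injective _ hembinj
  have hNcard : N.ncard = N'.ncard := Set.ncard_image_of_injective _ hembinj
  have hNpairs : MPairs N := by
    constructor
    · rintro e ⟨e', he', rfl⟩ f ⟨f', hf', rfl⟩ h1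
      exact congrArg emb (hN'.2.1 e' he' f' hf' (hι h1))
    · rintro e ⟨e', he', rfl⟩ f ⟨f', hf', rfl⟩ h2
      exact congrArg emb (hN'.2.2 e' he' f' hf' (hρ h2))
  have hNedge : ∀ e ∈ N, E e.1 e.2 := by
    rintro e ⟨e', he', rfl⟩; exact (hE' _ _).1 (hN'.1 e' he')
  have hNab : ∀ e ∈ N, (∃ a', ι a' = e.1) ∧ (∃ b', ρ b' = e.2) := by
    rintro e ⟨e', he', rfl⟩; exact ⟨⟨e'.1, rfl⟩, ⟨e'.2, rfl⟩⟩
  obtain ⟨M', S, hsub, hM'm, hM'card, hSss, hSfree, hScov, hM'left⟩ :=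
    aug_aux MAB.ncard MAB N le_rfl (Set.toFinite _) (Set.toFinite _)
      (MPairs.mono ⟨hMl, hMr⟩ hMABsub) hNpairs (by omega)
  have hM'AB : ∀ e ∈ M', (∃ a', ι a' = e.1) ∧ (∃ b', ρ b' = e.2) := by
    intro e he
    rcases hsub he with h | h
    · obtain ⟨e', _, rfl⟩ := h; exact ⟨⟨e'.1, rfl⟩, ⟨e'.2, rfl⟩⟩
    · exact hNab e h
  have hM'edge : ∀ e ∈ M', E e.1 e.2 := by
    intro e he
    rcases hsub he with h | h
    · exact hMedge e (hMABsub h)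
    · exact hNedge e h
  have hM'c1 : ∀ e ∈ M', c e = 1 := by
    intro e he
    obtain ⟨⟨a', ha'⟩, ⟨b', hb'⟩⟩ := hM'AB e he
    have : e = (ι a', ρ b') := by rw [ha', hb']
    rw [this]; exact hc1 a' b'
  -- the set of "cross" edges of M to be removed
  set R : Set (α × β) := {e ∈ M | e ∉ MAB ∧ ∃ f ∈ M', f.1 = e.1} with hRdef
  have hRS : ∀ e ∈ R, e.1 ∈ S := by
    rintro e ⟨heM, heAB, f, hfM', hf1⟩
    rcases hM'left f hfM' with h | ⟨g, hgAB, hg1⟩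
    · exact hf1 ▸ h
    · exact absurd (hMl e heM g (hMABsub hgAB) (hf1 ▸ hg1).symm ▸ hgAB) heAB
  have hRss : R.Subsingleton := by
    intro e he f hf
    exact hMl e he.1 f hf.1 (hSss (hRS e he) (hRS f hf))
  set P : Set (α × β) := (M \ MAB) \ R with hPdef
  have hRsub : R ⊆ M \ MAB := fun e he => ⟨he.1, he.2.1⟩
  have hPM'disj : Disjoint P M' := by
    rw [Set.disjoint_left]
    rintro e ⟨⟨heM, heAB⟩, heR⟩ heM'
    exact heR ⟨heM, heAB, e, heM', rfl⟩
  set Mstar : Set (α × β) := P ∪ M' with hMstardef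
  have hMstarmatch : IsMatching E Mstar := by
    refine ⟨?_, ?_, ?_⟩
    · intro e he
      rcases he with h | h
      · exact hMedge e h.1.1
      · exact hM'edge e h
    · intro e he f hf h1
      rcases he with he | he <;> rcases hf with hf | hf
      · exact hMl e he.1.1 f hf.1.1 h1
      · exact absurd ⟨he.1.1, he.1.2, f, hf, h1.symm⟩ he.2
      · exact absurd ⟨hf.1.1, hf.1.2, e, he, h1⟩ hf.2
      · exact hM'm.1 e he f hf h1
    · intro e he f hf h2
      rcases he with he | he <;> rcases hf with hf | hf
      · exact hMr e he.1.1 f hf.1.1 h2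
      · exact absurd (hMBA e he.1.1 (h2 ▸ (hM'AB f hf).2)) he.1.2
      · exact absurd (hMBA f hf.1.1 (h2 ▸ (hM'AB e he).2)) hf.1.2
      · exact hM'm.2 e he f hf h2
  have hMeq : (P ∪ R) ∪ MAB = M := by
    ext e
    constructor
    · rintro ((h | h) | h)
      · exact h.1.1
      · exact h.1
      · exact hMABsub h
    · intro he
      by_cases h1 : e ∈ MAB
      · exact Or.inr h1
      by_cases h2 : e ∈ R
      · exact Or.inl (Or.inr h2)
      · exact Or.inl (Or.inl ⟨⟨he, h1⟩, h2⟩)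
  have hdisjPR : Disjoint P R := Set.disjoint_left.2 fun e he => he.2
  have hdisjPRAB : Disjoint (P ∪ R) MAB := by
    rw [Set.disjoint_left]
    rintro e (he | he)
    · exact he.1.2
    · exact he.2.1
  have hcardM : P.ncard + R.ncard + MAB.ncard = M.ncard := by
    rw [← hMeq, Set.ncard_union_eq hdisjPRAB (Set.toFinite _) (Set.toFinite _),
      Set.ncard_union_eq hdisjPR (Set.toFinite _) (Set.toFinite _)]
  have hcardMstar : Mstar.ncard = P.ncard + M'.ncard :=
    Set.ncard_union_eq hPM'disj (Set.toFinite _) (Set.toFinite _)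
  have hwMsplit : (∑ᶠ e ∈ M, c e) =
      (∑ᶠ e ∈ P, c e) + (∑ᶠ e ∈ R, c e) + (∑ᶠ e ∈ MAB, c e) := by
    rw [← hMeq, finsum_mem_union hdisjPRAB (Set.toFinite _) (Set.toFinite _),
      finsum_mem_union hdisjPR (Set.toFinite _) (Set.toFinite _)]
  have hwMstar : (∑ᶠ e ∈ Mstar, c e) = (∑ᶠ e ∈ P, c e) + M'.ncard := by
    rw [hMstardef, finsum_mem_union hPM'disj (Set.toFinite _) (Set.toFinite _),
      sum_one_eq_ncard (Set.toFinite _) hM'c1]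
  have hwMAB : (∑ᶠ e ∈ MAB, c e) = MAB.ncard := by
    refine sum_one_eq_ncard (Set.toFinite _) ?_
    rintro e ⟨e', _, rfl⟩
    exact hc1 e'.1 e'.2
  rcases hRss.eq_empty_or_singleton with hRe | ⟨e₀, hRe⟩
  · -- no cross edge removed: Mstar is a strictly larger matching
    have : Mstar.ncard = M.ncard + 1 := by
      rw [hcardMstar, hM'card]
      rw [hRe] at hcardM
      simp only [Set.ncard_empty] at hcardM
      omega
    have := hMmax Mstar hMstarmatch
    omega
  · -- one cross edge removed: Mstar has the same size but smaller weight
    have he₀R : e₀ ∈ R := by rw [hRe]; rfl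
    have hRcard : R.ncard = 1 := by rw [hRe]; simp
    have hcardMstar' : Mstar.ncard = M.ncard := by
      rw [hcardMstar, hM'card]; omega
    have hMstarmax : IsMaxMatching E Mstar :=
      ⟨hMstarmatch, fun K hK => (hMmax K hK).trans_eq hcardMstar'.symm⟩
    have hmin := hMmin Mstar hMstarmax
    have hce₀ : 2 ≤ c e₀ := by
      refine hc2 e₀.1 e₀.2 (hMedge e₀ he₀R.1) ?_ ?_
      · obtain ⟨f, hfM', hf1⟩ := hScov e₀.1 (hRS e₀ he₀R)
        exact hf1 ▸ (hM'AB f hfM').1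
      · intro b' hb'
        exact he₀R.2.1 (hMBA e₀ he₀R.1 ⟨b', hb'⟩)
    have hwR : (∑ᶠ e ∈ R, c e) = c e₀ := by rw [hRe]; exact finsum_mem_singleton
    rw [hwMsplit, hwMstar, hwR, hwMAB, hM'card] at hmin
    omega

lemma isMatching_swap {α β : Type*} {E : α → β → Prop} {M : Set (α × β)}
    (h : IsMatching E M) : IsMatching (fun b a => E a b) (Prod.swap '' M) := by
  refine ⟨?_, ?_, ?_⟩
  · rintro e ⟨f, hf, rfl⟩; exact h.1 f hf
  · rintro e ⟨f, hf, rfl⟩ g ⟨g', hg', rfl⟩ h1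
    exact congrArg Prod.swap (h.2.2 f hf g' hg' h1)
  · rintro e ⟨f, hf, rfl⟩ g ⟨g', hg', rfl⟩ h2
    exact congrArg Prod.swap (h.2.1 f hf g' hg' h2)

lemma ncard_swap_image {α β : Type*} (M : Set (α × β)) :
    (Prod.swap '' M).ncard = M.ncard :=
  Set.ncard_image_of_injective _ Prod.swap_injective

lemma isMaxMatching_swap {α β : Type*} {E : α → β → Prop} {M : Set (α × β)}
    (h : IsMaxMatching E M) : IsMaxMatching (fun b a => E a b) (Prod.swap '' M) := by
  refine ⟨isMatching_swap h.1, ?_⟩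
  intro N hN
  have h2 := h.2 (Prod.swap '' N) (isMatching_swap hN)
  rwa [ncard_swap_image, ← ncard_swap_image M] at h2

lemma finsum_swap_image {α β : Type*} (M : Set (α × β)) (c : α × β → ℕ) :
    (∑ᶠ e ∈ Prod.swap '' M, c (e.2, e.1)) = ∑ᶠ e ∈ M, c e := by
  rw [finsum_mem_image (Prod.swap_injective.injOn)]
  simp

lemma isMinWtMaxMatching_swap {α β : Type*} {E : α → β → Prop} {c : α × β → ℕ}
    {M : Set (α × β)} (h : IsMinWtMaxMatching E c M) :
    IsMinWtMaxMatching (fun b a => E a b) (fun e => c (e.2, e.1)) (Prod.swap '' M) := by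
  refine ⟨isMaxMatching_swap h.1, ?_⟩
  intro N hN
  have hmax : IsMaxMatching E (Prod.swap '' N) := isMaxMatching_swap hN
  have h2 := h.2 (Prod.swap '' N) hmax
  calc (∑ᶠ e ∈ Prod.swap '' M, c (e.2, e.1)) = ∑ᶠ e ∈ M, c e := finsum_swap_image M c
    _ ≤ ∑ᶠ e ∈ Prod.swap '' N, c e := h2
    _ = ∑ᶠ e ∈ N, c (e.2, e.1) := by
        rw [finsum_mem_image (Prod.swap_injective.injOn)]
        rfl

/-- key claim in the proof of Theorem 4: any minimum-weight maximum
matching of `B(Ā', B̄')` w.r.t. the above weight restricts to a maximum matching of the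
state bipartite graph `B(Ā₀)` and to a maximum matching of each `B(Ā_k)`, `k = 1, …, l`. -/
theorem minWtMaxMatching_restricts_to_maxMatchings
    {n0 l p0 : ℕ} {m : Fin l → ℕ}
    (A0 : Matrix (Fin n0) (Fin n0) Bool)
    (Ak : ∀ k, Matrix (Fin (m k)) (Fin (m k)) Bool)
    (Ek : ∀ k, Matrix (Fin n0) (Fin (m k)) Bool)
    (B0 : Matrix (Fin n0) (Fin p0) Bool)
    (M : Set (((Fin n0 ⊕ (Σ k : Fin l, Fin (m k))) ⊕ Fin p0) × (Fin n0 ⊕ (Σ k : Fin l, Fin (m k)))))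
    (hM : IsMinWtMaxMatching (sysBipEdge (blockA A0 Ak Ek) (blockB B0)) blockWeight M) :
    IsMaxMatching (stateBipEdge A0)
      {e : Fin n0 × Fin n0 | (Sum.inl (Sum.inl e.1), Sum.inl e.2) ∈ M} ∧
    ∀ k : Fin l, IsMaxMatching (stateBipEdge (Ak k))
      {e : Fin (m k) × Fin (m k) |
        ((Sum.inl (Sum.inr ⟨k, e.1⟩) : (Fin n0 ⊕ (Σ k : Fin l, Fin (m k))) ⊕ Fin p0),
          (Sum.inr ⟨k, e.2⟩ : Fin n0 ⊕ (Σ k : Fin l, Fin (m k)))) ∈ M} := by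
  classical
  constructor
  · -- block 0: apply the core lemma to the swapped (mirrored) bipartite graph
    have hMswap := isMinWtMaxMatching_swap hM
    have hres := restrict_maxMatching
      (fun (b : Fin n0 ⊕ (Σ k : Fin l, Fin (m k)))
           (a : (Fin n0 ⊕ (Σ k : Fin l, Fin (m k))) ⊕ Fin p0) =>
        sysBipEdge (blockA A0 Ak Ek) (blockB B0) a b)
      (fun e => blockWeight (e.2, e.1))
      (Sum.inl : Fin n0 → Fin n0 ⊕ (Σ k : Fin l, Fin (m k)))
      (fun j => (Sum.inl (Sum.inl j) : (Fin n0 ⊕ (Σ k : Fin l, Fin (m k))) ⊕ Fin p0))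
      Sum.inl_injective
      (fun a b h => by simpa using h)
      (fun i j => A0 i j = true)
      (fun i j => Iff.rfl)
      (by
        rintro x y hxy ⟨j, rfl⟩
        cases x with
        | inl i => exact ⟨i, rfl⟩
        | inr s => exact absurd hxy Bool.false_ne_true)
      (fun i j => rfl)
      (by
        rintro x y _ ⟨i, rfl⟩ hny
        rcases y with (j | s) | p
        · exact absurd rfl (hny j)
        · exact le_refl 2
        · exact le_refl 2)
      (Prod.swap '' M) hMswap
    have hres2 := isMaxMatching_swap hres
    have hset : {e : Fin n0 × Fin n0 | (Sum.inl (Sum.inl e.1), Sum.inl e.2) ∈ M} =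
        Prod.swap '' {e : Fin n0 × Fin n0 |
          ((Sum.inl e.1 : Fin n0 ⊕ (Σ k : Fin l, Fin (m k))),
            (Sum.inl (Sum.inl e.2) : (Fin n0 ⊕ (Σ k : Fin l, Fin (m k))) ⊕ Fin p0))
              ∈ Prod.swap '' M} := by
      ext ⟨i, j⟩
      simp [Set.image_swap_eq_preimage_swap]
    rw [hset]
    exact hres2
  · -- blocks 1, …, l
    intro k
    have hredk : ∀ (a b : Fin (m k)),
        blockA A0 Ak Ek (Sum.inr ⟨k, b⟩) (Sum.inr ⟨k, a⟩) = Ak k b a := by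
      intro a b
      simp [blockA]
    exact restrict_maxMatching
      (sysBipEdge (blockA A0 Ak Ek) (blockB B0)) blockWeight
      (fun a => (Sum.inl (Sum.inr ⟨k, a⟩) : (Fin n0 ⊕ (Σ k : Fin l, Fin (m k))) ⊕ Fin p0))
      (fun b => (Sum.inr ⟨k, b⟩ : Fin n0 ⊕ (Σ k : Fin l, Fin (m k))))
      (fun a b h => by simpa using h)
      (fun a b h => by simpa using h)
      (stateBipEdge (Ak k))
      (by
        intro a b
        show Ak k b a = true ↔ blockA A0 Ak Ek (Sum.inr ⟨k, b⟩) (Sum.inr ⟨k, a⟩) = true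
        rw [hredk])
      (by
        rintro a b hE ⟨b', rfl⟩
        rcases a with (j | s) | p
        · exact absurd hE Bool.false_ne_true
        · -- hE : blockA (inr ⟨k,b'⟩) (inr s) = true, forces s.1 = k
          obtain ⟨s1, s2⟩ := s
          simp only [sysBipEdge, blockA] at hE
          split at hE
          · rename_i h
            subst h
            exact ⟨s2, rfl⟩
          · exact absurd hE Bool.false_ne_true
        · exact absurd hE Bool.false_ne_true)
      (fun a b => rfl)
      (by
        rintro a b hE ⟨a', rfl⟩ hnb
        rcases b with i | s
        · exact le_refl 2
        · exfalso
          obtain ⟨s1, s2⟩ := s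
          simp only [sysBipEdge, blockA] at hE
          split at hE
          · rename_i h
            subst h
            exact hnb s2 rfl
          · exact absurd hE Bool.false_ne_true)
      M hM
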